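/- arXiv:2106.02264 — 5 statements merged into one kernel-verified Lean document; each statement's English description precedes it below -/
import Mathlib

section
/- Fix K ∈ ℕ, a sample x⁰ ∈ (Fin K → Bool), and β ∈ ℝ, and define the softened weight of x ∈ (Fin K → Bool) by w(x) := Π_{k : Fin K} (β if x k = x⁰ k, else 1−β). Let I, J ⊆ Fin K be disjoint sets of coordinates, and let A, B ⊆ (Fin K → Bool) be sets such that membership in A depends only on the coordinates in I (if x and x' agree on all coordinates in I, then x ∈ A ↔ x' ∈ A) and membership in B depends only on the coordinates in J. Then Σ_{x ∈ A ∩ B} w(x) = ( Σ_{x ∈ A} w(x) ) · ( Σ_{x ∈ B} w(x) ). -/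
/-- Product factorization of the softened weight over sets depending on disjoint
    coordinate sets: Σ_{x ∈ A ∩ B} w(x) = (Σ_{x ∈ A} w(x)) · (Σ_{x ∈ B} w(x)). -/
theorem stmt_3 {K : ℕ} (x0 : Fin K → Bool) (β : ℝ)
    (w : (Fin K → Bool) → ℝ)
    (hw : ∀ x, w x = ∏ k, if x k = x0 k then β else 1 - β)
    (I J : Finset (Fin K)) (hIJ : Disjoint I J)
    (A B : Finset (Fin K → Bool))
    (hA : ∀ x x', (∀ k ∈ I, x k = x' k) → (x ∈ A ↔ x' ∈ A))
    (hB : ∀ x x', (∀ k ∈ J, x k = x' k) → (x ∈ B ↔ x' ∈ B)) :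
    ∑ x ∈ A ∩ B, w x = (∑ x ∈ A, w x) * (∑ x ∈ B, w x) := by
  classical
  set g : Fin K → Bool → ℝ := fun k b => if b = x0 k then β else 1 - β with hg
  -- B depends only on coordinates outside I
  have hB' : ∀ x x' : Fin K → Bool, (∀ k, k ∉ I → x k = x' k) → (x ∈ B ↔ x' ∈ B) := by
    intro x x' h
    exact hB x x' fun k hk => h k (Finset.disjoint_right.mp hIJ hk)
  set p : Fin K → Prop := fun k => k ∈ I with hp
  set e := (Equiv.piEquivPiSubtypeProd p (fun _ => Bool)).symm with he
  set wA : ({k // p k} → Bool) → ℝ := fun u => ∏ k : {k // p k}, g k (u k) with hwA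
  set wB : ({k // ¬ p k} → Bool) → ℝ := fun v => ∏ k : {k // ¬ p k}, g k (v k) with hwB
  have hek : ∀ (u : {k // p k} → Bool) (v : {k // ¬ p k} → Bool) (k : Fin K),
      e (u, v) k = if h : p k then u ⟨k, h⟩ else v ⟨k, h⟩ := by
    intro u v k
    simp [he, Equiv.piEquivPiSubtypeProd]
  have hsplit : ∀ (u : {k // p k} → Bool) (v : {k // ¬ p k} → Bool),
      w (e (u, v)) = wA u * wB v := by
    intro u v
    rw [hw]
    have := Fintype.prod_subtype_mul_prod_subtype p (fun k => g k (e (u, v) k))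
    rw [← this]
    congr 1
    · exact Finset.prod_congr (Finset.ext fun k => by simp)
        fun k _ => by rw [hek, dif_pos k.2]
    · exact Finset.prod_congr (Finset.ext fun k => by simp)
        fun k _ => by rw [hek, dif_neg k.2]
  set a : ({k // p k} → Bool) → Prop := fun u => e (u, fun _ => false) ∈ A with ha
  set b : ({k // ¬ p k} → Bool) → Prop := fun v => e ((fun _ => false), v) ∈ B with hb
  have haiff : ∀ u v, (e (u, v) ∈ A ↔ a u) := by
    intro u v
    refine hA _ _ fun k hk => ?_
    rw [hek, hek, dif_pos hk, dif_pos hk]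
  have hbiff : ∀ u v, (e (u, v) ∈ B ↔ b v) := by
    intro u v
    refine hB' _ _ fun k hk => ?_
    rw [hek, hek, dif_neg hk, dif_neg hk]
  -- rewrite sums over Finsets as sums over univ with indicators, then transport along e
  have key : ∀ (S : Finset (Fin K → Bool)),
      ∑ x ∈ S, w x = ∑ u : {k // p k} → Bool, ∑ v : {k // ¬ p k} → Bool,
        if e (u, v) ∈ S then wA u * wB v else 0 := by
    intro S
    rw [show (∑ x ∈ S, w x) = ∑ x : Fin K → Bool, if x ∈ S then w x else 0 by
      rw [Finset.sum_ite_mem, Finset.univ_inter]]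
    rw [← Equiv.sum_comp e (fun x => if x ∈ S then w x else 0), Fintype.sum_prod_type]
    exact Finset.sum_congr rfl fun u _ => Finset.sum_congr rfl fun v _ => by
      rw [hsplit]
  have sumB1 : ∑ v : {k // ¬ p k} → Bool, wB v = 1 := by
    rw [hwB]
    rw [show (∑ v : {k // ¬ p k} → Bool, ∏ k : {k // ¬ p k}, g k (v k))
        = ∏ k : {k // ¬ p k}, ∑ b : Bool, g k b by
      rw [Finset.prod_univ_sum]
      rw [Fintype.piFinset_univ]]
    refine Finset.prod_eq_one fun k _ => ?_
    rcases Bool.dichotomy (x0 k) with h | h <;> simp [hg, h]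
  have sumA1 : ∑ u : {k // p k} → Bool, wA u = 1 := by
    rw [hwA]
    rw [show (∑ u : {k // p k} → Bool, ∏ k : {k // p k}, g k (u k))
        = ∏ k : {k // p k}, ∑ b : Bool, g k b by
      rw [Finset.prod_univ_sum]
      rw [Fintype.piFinset_univ]]
    refine Finset.prod_eq_one fun k _ => ?_
    rcases Bool.dichotomy (x0 k) with h | h <;> simp [hg, h]
  have hAB : ∀ u v, ((e (u, v) ∈ A ∩ B) ↔ (a u ∧ b v)) := by
    intro u v
    rw [Finset.mem_inter, haiff, hbiff]
  rw [key (A ∩ B), key A, key B]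
  have L : (∑ u : {k // p k} → Bool, ∑ v : {k // ¬ p k} → Bool,
      if e (u, v) ∈ A ∩ B then wA u * wB v else 0)
      = (∑ u, if a u then wA u else 0) * (∑ v, if b v then wB v else 0) := by
    rw [Finset.sum_mul_sum]
    refine Finset.sum_congr rfl fun u _ => Finset.sum_congr rfl fun v _ => ?_
    simp only [hAB u v]
    by_cases h1 : a u <;> by_cases h2 : b v <;> simp [h1, h2]
  have LA : (∑ u : {k // p k} → Bool, ∑ v : {k // ¬ p k} → Bool,
      if e (u, v) ∈ A then wA u * wB v else 0)
      = (∑ u, if a u then wA u else 0) := by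
    calc _ = ∑ u : {k // p k} → Bool, (if a u then wA u else 0)
              * ∑ v : {k // ¬ p k} → Bool, wB v := by
          refine Finset.sum_congr rfl fun u _ => ?_
          rw [Finset.mul_sum]
          refine Finset.sum_congr rfl fun v _ => ?_
          simp only [haiff u v]
          by_cases h1 : a u <;> simp [h1]
      _ = _ := by simp [sumB1]
  have LB : (∑ u : {k // p k} → Bool, ∑ v : {k // ¬ p k} → Bool,
      if e (u, v) ∈ B then wA u * wB v else 0)
      = (∑ v, if b v then wB v else 0) := by
    calc _ = ∑ u : {k // p k} → Bool, wA u
              * ∑ v : {k // ¬ p k} → Bool, (if b v then wB v else 0) := by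
          refine Finset.sum_congr rfl fun u _ => ?_
          rw [Finset.mul_sum]
          refine Finset.sum_congr rfl fun v _ => ?_
          simp only [hbiff u v]
          by_cases h2 : b v <;> simp [h2]
      _ = _ := by rw [← Finset.sum_mul, sumA1, one_mul]
  rw [L, LA, LB]
end

section
/- Let n ≥ 1, let k_1, …, k_n be positive integers with Σ_{i=1}^n k_i = 2c for a natural number c, let m ≥ 0 be real, and for S ⊆ Fin n define weight(S) := −m/2 − m·c + m·Σ_{i∈S} k_i. Let σ(t) := 1/(1 + exp(−t)). If S satisfies Σ_{i∈S} k_i ≠ c, then one of weight(S), weight(Sᶜ) is ≥ m/2 and the other is ≤ −3m/2, and consequently σ(m/2) ≤ σ(weight(S)) + σ(weight(Sᶜ)) ≤ 1 + σ(−3m/2). -/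
private lemma sig_mono (σ : ℝ → ℝ) (hσ : ∀ t, σ t = 1 / (1 + Real.exp (-t)))
    {a b : ℝ} (h : a ≤ b) : σ a ≤ σ b := by
  rw [hσ, hσ]
  have h1 : (0:ℝ) < 1 + Real.exp (-b) := by positivity
  apply one_div_le_one_div_of_le h1
  have := Real.exp_le_exp.mpr (neg_le_neg h)
  linarith

private lemma sig_pos (σ : ℝ → ℝ) (hσ : ∀ t, σ t = 1 / (1 + Real.exp (-t)))
    (a : ℝ) : 0 ≤ σ a := by
  rw [hσ]; positivity

private lemma sig_le_one (σ : ℝ → ℝ) (hσ : ∀ t, σ t = 1 / (1 + Real.exp (-t)))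
    (a : ℝ) : σ a ≤ 1 := by
  rw [hσ]
  rw [div_le_one (by positivity)]
  have := Real.exp_pos (-a)
  linarith

/-- For a subset not solving the partition instance, one of weight(S), weight(Sᶜ) is
    ≥ m/2 and the other is ≤ −3m/2, whence σ(m/2) ≤ σ(weight S) + σ(weight Sᶜ) ≤ 1 + σ(−3m/2). -/
theorem stmt_8 {n : ℕ} (hn : 1 ≤ n) (k : Fin n → ℕ) (c : ℕ)
    (hk_pos : ∀ i, 0 < k i) (hsum : ∑ i, k i = 2 * c)
    (m : ℝ) (hm : 0 ≤ m)
    (weight : Finset (Fin n) → ℝ)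
    (hweight : ∀ S, weight S = -m / 2 - m * c + m * ∑ i ∈ S, (k i : ℝ))
    (σ : ℝ → ℝ) (hσ : ∀ t, σ t = 1 / (1 + Real.exp (-t)))
    (S : Finset (Fin n)) (hS : ∑ i ∈ S, k i ≠ c) :
    ((m / 2 ≤ weight S ∧ weight Sᶜ ≤ -(3 * m) / 2) ∨
      (m / 2 ≤ weight Sᶜ ∧ weight S ≤ -(3 * m) / 2)) ∧
    σ (m / 2) ≤ σ (weight S) + σ (weight Sᶜ) ∧
    σ (weight S) + σ (weight Sᶜ) ≤ 1 + σ (-(3 * m) / 2) := by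
  set s : ℕ := ∑ i ∈ S, k i with hs
  have hcompl : ∑ i ∈ Sᶜ, k i = 2 * c - s := by
    have : s + ∑ i ∈ Sᶜ, k i = 2 * c := by
      rw [hs, Finset.sum_add_sum_compl, hsum]
    omega
  have hsle : s ≤ 2 * c := by
    have : s + ∑ i ∈ Sᶜ, k i = 2 * c := by
      rw [hs, Finset.sum_add_sum_compl, hsum]
    omega
  have hwS : weight S = -m / 2 - m * c + m * s := by
    rw [hweight]; norm_cast
  have hwSc : weight Sᶜ = -m / 2 + m * c - m * s := by
    have hc : (∑ i ∈ Sᶜ, (k i : ℝ)) = 2 * c - s := by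
      rw [← Nat.cast_sum, hcompl, Nat.cast_sub hsle]
      push_cast; ring
    rw [hweight, hc]; ring
  have key : (m / 2 ≤ weight S ∧ weight Sᶜ ≤ -(3 * m) / 2) ∨
      (m / 2 ≤ weight Sᶜ ∧ weight S ≤ -(3 * m) / 2) := by
    rcases lt_or_gt_of_ne hS with h | h
    · right
      have h1 : (s : ℝ) + 1 ≤ c := by exact_mod_cast h
      constructor
      · rw [hwSc]; nlinarith
      · rw [hwS]; nlinarith
    · left
      have h1 : (c : ℝ) + 1 ≤ s := by exact_mod_cast h
      constructor
      · rw [hwS]; nlinarith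
      · rw [hwSc]; nlinarith
  refine ⟨key, ?_, ?_⟩
  · rcases key with ⟨h1, _⟩ | ⟨h1, _⟩
    · have := sig_mono σ hσ h1
      have := sig_pos σ hσ (weight Sᶜ)
      linarith
    · have := sig_mono σ hσ h1
      have := sig_pos σ hσ (weight S)
      linarith
  · rcases key with ⟨_, h2⟩ | ⟨_, h2⟩
    · have := sig_mono σ hσ h2
      have := sig_le_one σ hσ (weight S)
      linarith
    · have := sig_mono σ hσ h2
      have := sig_le_one σ hσ (weight Sᶜ)
      linarith
end

section
/- Let n ≥ 1, let k_1, …, k_n be positive integers with Σ_{i=1}^n k_i = 2c for a natural number c, let m > 0 be real, and for S ⊆ Fin n define weight(S) := −m/2 − m·c + m·Σ_{i∈S} k_i. Let σ(t) := 1/(1 + exp(−t)), let P := { S ⊆ Fin n : Σ_{i∈S} k_i = c }, and suppose ε > 0 satisfies 2·σ(−m/2) < ε and 1 − σ(m/2) < ε. Then ((2^n − |P|)/2)·(1−ε) ≤ Σ_{S ⊆ Fin n} σ(weight(S)) ≤ (|P|/2)·ε + ((2^n − |P|)/2)·(1+ε). -/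
/-- Sandwich bound on the total sigmoid mass Σ_S σ(weight(S)) in terms of |P|. -/
theorem stmt_9 {n : ℕ} (hn : 1 ≤ n) (k : Fin n → ℕ) (c : ℕ)
    (hk_pos : ∀ i, 0 < k i) (hsum : ∑ i, k i = 2 * c)
    (m : ℝ) (hm : 0 < m)
    (weight : Finset (Fin n) → ℝ)
    (hweight : ∀ S, weight S = -m / 2 - m * c + m * ∑ i ∈ S, (k i : ℝ))
    (σ : ℝ → ℝ) (hσ : ∀ t, σ t = 1 / (1 + Real.exp (-t)))
    (P : Finset (Finset (Fin n)))
    (hP : P = Finset.univ.filter (fun S : Finset (Fin n) => ∑ i ∈ S, k i = c))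
    (ε : ℝ) (hε : 0 < ε)
    (hε1 : 2 * σ (-m / 2) < ε) (hε2 : 1 - σ (m / 2) < ε) :
    ((2 ^ n - (P.card : ℝ)) / 2) * (1 - ε) ≤ ∑ S : Finset (Fin n), σ (weight S) ∧
    ∑ S : Finset (Fin n), σ (weight S) ≤
      ((P.card : ℝ) / 2) * ε + ((2 ^ n - (P.card : ℝ)) / 2) * (1 + ε) := by
  -- basic sigmoid facts
  have hσpos : ∀ t, 0 < σ t := by
    intro t; rw [hσ]; positivity
  have hσle1 : ∀ t, σ t ≤ 1 := by
    intro t; rw [hσ]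
    rw [div_le_one (by positivity)]
    have := Real.exp_pos (-t); linarith
  have hσmono : ∀ a b : ℝ, a ≤ b → σ a ≤ σ b := by
    intro a b hab
    rw [hσ, hσ]
    apply one_div_le_one_div_of_le
    · positivity
    · have := Real.exp_le_exp.mpr (neg_le_neg hab); linarith
  -- complement sums
  have hadd : ∀ S : Finset (Fin n), (∑ i ∈ S, k i) + (∑ i ∈ Sᶜ, k i) = 2 * c := by
    intro S
    rw [Finset.sum_add_sum_compl, hsum]
  -- weight bounds
  have hwP : ∀ S : Finset (Fin n), (∑ i ∈ S, k i) = c → weight S = -m / 2 := by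
    intro S hc
    rw [hweight]
    have : (∑ i ∈ S, (k i : ℝ)) = c := by exact_mod_cast congrArg (Nat.cast : ℕ → ℝ) hc
    rw [this]; ring
  have hwbig : ∀ S : Finset (Fin n), c < ∑ i ∈ S, k i → m / 2 ≤ weight S := by
    intro S hc
    rw [hweight]
    have : (c : ℝ) + 1 ≤ ∑ i ∈ S, (k i : ℝ) := by
      push_cast
      exact_mod_cast Nat.succ_le_of_lt hc
    nlinarith
  have hwsmall : ∀ S : Finset (Fin n), (∑ i ∈ S, k i) < c → weight S ≤ -m / 2 := by
    intro S hc
    rw [hweight]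
    have : (∑ i ∈ S, (k i : ℝ)) + 1 ≤ c := by exact_mod_cast Nat.succ_le_of_lt hc
    nlinarith
  have hσsmall : ∀ S : Finset (Fin n), (∑ i ∈ S, k i) < c → σ (weight S) ≤ ε / 2 := by
    intro S hc
    have := hσmono _ _ (hwsmall S hc)
    linarith
  have hσbig : ∀ S : Finset (Fin n), c < ∑ i ∈ S, k i → 1 - ε ≤ σ (weight S) := by
    intro S hc
    have := hσmono _ _ (hwbig S hc)
    linarith
  -- pair bounds
  set g : Finset (Fin n) → ℝ := fun S => σ (weight S) + σ (weight Sᶜ) with hg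
  have hpairP : ∀ S : Finset (Fin n), (∑ i ∈ S, k i) = c → g S ≤ ε ∧ 0 ≤ g S := by
    intro S hc
    have hcc : (∑ i ∈ Sᶜ, k i) = c := by have := hadd S; omega
    simp only [hg, hwP S hc, hwP Sᶜ hcc]
    constructor
    · linarith
    · have := hσpos (-m / 2); linarith
  have hpairN : ∀ S : Finset (Fin n), (∑ i ∈ S, k i) ≠ c →
      1 - ε ≤ g S ∧ g S ≤ 1 + ε := by
    intro S hc
    rcases lt_or_gt_of_ne hc with h | h
    · have hcc : c < ∑ i ∈ Sᶜ, k i := by have := hadd S; omega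
      have h1 := hσsmall S h
      have h2 := hσbig Sᶜ hcc
      have h3 := hσle1 (weight Sᶜ)
      have h4 := hσpos (weight S)
      constructor <;> simp only [hg] <;> linarith
    · have hcc : (∑ i ∈ Sᶜ, k i) < c := by have := hadd S; omega
      have h1 := hσsmall Sᶜ hcc
      have h2 := hσbig S h
      have h3 := hσle1 (weight S)
      have h4 := hσpos (weight Sᶜ)
      constructor <;> simp only [hg] <;> linarith
  -- doubling via complement bijection
  set T : ℝ := ∑ S : Finset (Fin n), σ (weight S) with hT
  have hcomplsum : (∑ S : Finset (Fin n), σ (weight Sᶜ)) = T := by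
    rw [hT]
    exact Fintype.sum_equiv (Function.Involutive.toPerm _ (fun S : Finset (Fin n) => compl_compl S))
      _ _ (fun S => rfl)
  have hdouble : 2 * T = ∑ S : Finset (Fin n), g S := by
    simp only [hg, Finset.sum_add_distrib, hcomplsum, hT]
    ring
  -- split the sum over P and its complement
  set p : Finset (Fin n) → Prop := fun S => (∑ i ∈ S, k i) = c with hp
  have hsplit : (∑ S : Finset (Fin n), g S) =
      (∑ S ∈ Finset.univ.filter p, g S) + ∑ S ∈ Finset.univ.filter (fun S => ¬ p S), g S := by
    rw [Finset.sum_filter_add_sum_filter_not]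
  -- cardinalities
  have hcards : (Finset.univ.filter p).card + (Finset.univ.filter (fun S => ¬ p S)).card = 2 ^ n := by
    rw [Finset.card_filter_add_card_filter_not]
    simp [Fintype.card_finset]
  have hPcard : P.card = (Finset.univ.filter p).card := by rw [hP]
  have hQcard : ((Finset.univ.filter (fun S => ¬ p S)).card : ℝ) = 2 ^ n - (P.card : ℝ) := by
    rw [hPcard]
    have : ((Finset.univ.filter p).card : ℝ) + ((Finset.univ.filter (fun S => ¬ p S)).card : ℝ)
        = 2 ^ n := by exact_mod_cast hcards
    linarith
  -- bounds on the two partial sums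
  have hPlo : 0 ≤ ∑ S ∈ Finset.univ.filter p, g S :=
    Finset.sum_nonneg fun S hS => (hpairP S (by simpa [hp] using (Finset.mem_filter.mp hS).2)).2
  have hPhi : (∑ S ∈ Finset.univ.filter p, g S) ≤ (P.card : ℝ) * ε := by
    rw [hPcard]
    calc (∑ S ∈ Finset.univ.filter p, g S) ≤ ∑ S ∈ Finset.univ.filter p, ε :=
          Finset.sum_le_sum fun S hS =>
            (hpairP S (by simpa [hp] using (Finset.mem_filter.mp hS).2)).1
      _ = ((Finset.univ.filter p).card : ℝ) * ε := by rw [Finset.sum_const, nsmul_eq_mul]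
  have hNlo : (2 ^ n - (P.card : ℝ)) * (1 - ε) ≤
      ∑ S ∈ Finset.univ.filter (fun S => ¬ p S), g S := by
    rw [← hQcard]
    calc ((Finset.univ.filter (fun S => ¬ p S)).card : ℝ) * (1 - ε)
        = ∑ S ∈ Finset.univ.filter (fun S => ¬ p S), (1 - ε) := by
          rw [Finset.sum_const, nsmul_eq_mul]
      _ ≤ _ := Finset.sum_le_sum fun S hS =>
          (hpairN S (by simpa [hp] using (Finset.mem_filter.mp hS).2)).1
  have hNhi : (∑ S ∈ Finset.univ.filter (fun S => ¬ p S), g S) ≤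
      (2 ^ n - (P.card : ℝ)) * (1 + ε) := by
    rw [← hQcard]
    calc (∑ S ∈ Finset.univ.filter (fun S => ¬ p S), g S)
        ≤ ∑ S ∈ Finset.univ.filter (fun S => ¬ p S), (1 + ε) :=
          Finset.sum_le_sum fun S hS =>
            (hpairN S (by simpa [hp] using (Finset.mem_filter.mp hS).2)).2
      _ = _ := by rw [Finset.sum_const, nsmul_eq_mul]
  constructor
  · have : 2 * T ≥ (2 ^ n - (P.card : ℝ)) * (1 - ε) := by
      rw [hdouble, hsplit]; linarith
    linarith
  · have : 2 * T ≤ (P.card : ℝ) * ε + (2 ^ n - (P.card : ℝ)) * (1 + ε) := by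
      rw [hdouble, hsplit]; linarith
    linarith
end

section
/- Under the setting of the previous bound — n ≥ 1, positive integers k_1,…,k_n with Σ k_i = 2c, m > 0, weight(S) := −m/2 − m·c + m·Σ_{i∈S} k_i, σ(t) := 1/(1+exp(−t)), P := { S ⊆ Fin n : Σ_{i∈S} k_i = c }, and 0 < ε < 1 with 2σ(−m/2) < ε and 1 − σ(m/2) < ε — let Z := Σ_{S ⊆ Fin n} σ(weight(S)). Then 2^n − 2Z/(1−ε) ≤ |P| ≤ 2^n·(1+ε) − 2Z. -/
/-- Explicit lower and upper bounds on |P| in terms of the total sigmoid mass Z. -/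
theorem stmt_10 {n : ℕ} (hn : 1 ≤ n) (k : Fin n → ℕ) (c : ℕ)
    (hk_pos : ∀ i, 0 < k i) (hsum : ∑ i, k i = 2 * c)
    (m : ℝ) (hm : 0 < m)
    (weight : Finset (Fin n) → ℝ)
    (hweight : ∀ S, weight S = -m / 2 - m * c + m * ∑ i ∈ S, (k i : ℝ))
    (σ : ℝ → ℝ) (hσ : ∀ t, σ t = 1 / (1 + Real.exp (-t)))
    (P : Finset (Finset (Fin n)))
    (hP : P = Finset.univ.filter (fun S : Finset (Fin n) => ∑ i ∈ S, k i = c))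
    (ε : ℝ) (hε0 : 0 < ε) (hε1 : ε < 1)
    (hεa : 2 * σ (-m / 2) < ε) (hεb : 1 - σ (m / 2) < ε)
    (Z : ℝ) (hZ : Z = ∑ S : Finset (Fin n), σ (weight S)) :
    (2 : ℝ) ^ n - 2 * Z / (1 - ε) ≤ (P.card : ℝ) ∧
      (P.card : ℝ) ≤ (2 : ℝ) ^ n * (1 + ε) - 2 * Z := by
  -- basic sigmoid facts
  have hσpos : ∀ t, 0 < σ t := by
    intro t; rw [hσ]; positivity
  have hσlt1 : ∀ t, σ t < 1 := by
    intro t; rw [hσ, div_lt_one (by positivity)]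
    linarith [Real.exp_pos (-t)]
  have hσmono : ∀ a b : ℝ, a ≤ b → σ a ≤ σ b := by
    intro a b hab
    rw [hσ, hσ]
    have h1 : 0 < 1 + Real.exp (-b) := by positivity
    have h2 : Real.exp (-b) ≤ Real.exp (-a) := Real.exp_le_exp.mpr (by linarith)
    exact one_div_le_one_div_of_le h1 (by linarith)
  -- weight rewritten
  have hw : ∀ S : Finset (Fin n),
      weight S = m * ((∑ i ∈ S, k i : ℕ) - (c : ℝ)) - m / 2 := by
    intro S; rw [hweight]; push_cast; ring
  have hcompl : ∀ S : Finset (Fin n),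
      (∑ i ∈ S, k i) + (∑ i ∈ Sᶜ, k i) = 2 * c := by
    intro S; rw [Finset.sum_add_sum_compl, hsum]
  set g : Finset (Fin n) → ℝ := fun S => σ (weight S) + σ (weight Sᶜ) with hg
  -- 2Z equals sum of g
  have h2Z : ∑ S : Finset (Fin n), g S = 2 * Z := by
    have hb : Function.Bijective (fun S : Finset (Fin n) => Sᶜ) :=
      Function.Involutive.bijective (fun S => compl_compl S)
    have := Fintype.sum_bijective _ hb (fun S => σ (weight Sᶜ)) (fun S => σ (weight S))
      (fun S => by simp)
    simp only [hg, Finset.sum_add_distrib, hZ]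
    rw [this]; ring
  -- bounds for g on P
  have hgP : ∀ S : Finset (Fin n), (∑ i ∈ S, k i) = c → 0 ≤ g S ∧ g S ≤ ε := by
    intro S hS
    have hSc : (∑ i ∈ Sᶜ, k i) = c := by
      have := hcompl S; omega
    have h1 : weight S = -m / 2 := by rw [hw, hS]; ring
    have h2 : weight Sᶜ = -m / 2 := by rw [hw, hSc]; ring
    constructor
    · have := hσpos (weight S); have := hσpos (weight Sᶜ); simp only [hg]; linarith
    · simp only [hg, h1, h2]; linarith
  -- bounds for g off P
  have hgQ : ∀ S : Finset (Fin n), (∑ i ∈ S, k i) ≠ c → 1 - ε ≤ g S ∧ g S ≤ 1 + ε := by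
    intro S hS
    have key : ∀ T : Finset (Fin n), (∑ i ∈ T, k i) ≥ c + 1 →
        1 - ε ≤ σ (weight T) + σ (weight Tᶜ) ∧
        σ (weight T) + σ (weight Tᶜ) ≤ 1 + ε := by
      intro T hT
      have hTc : (∑ i ∈ Tᶜ, k i) + 1 ≤ c := by
        have := hcompl T; omega
      have hwT : m / 2 ≤ weight T := by
        rw [hw]
        have : (1 : ℝ) ≤ ((∑ i ∈ T, k i : ℕ) : ℝ) - (c : ℝ) := by
          have : (c : ℝ) + 1 ≤ ((∑ i ∈ T, k i : ℕ) : ℝ) := by exact_mod_cast hT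
          linarith
        nlinarith
      have hwTc : weight Tᶜ ≤ -m / 2 := by
        rw [hw]
        have : ((∑ i ∈ Tᶜ, k i : ℕ) : ℝ) - (c : ℝ) ≤ -1 := by
          have : ((∑ i ∈ Tᶜ, k i : ℕ) : ℝ) + 1 ≤ (c : ℝ) := by exact_mod_cast hTc
          linarith
        nlinarith
      have hb1 : σ (m / 2) ≤ σ (weight T) := hσmono _ _ hwT
      have hb2 : σ (weight Tᶜ) ≤ σ (-m / 2) := hσmono _ _ hwTc
      have := hσpos (weight Tᶜ)
      have := hσlt1 (weight T)
      have := hσpos (-m / 2)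
      constructor <;> [linarith; linarith]
    rcases lt_or_gt_of_ne hS with h | h
    · have hTc : (∑ i ∈ Sᶜ, k i) ≥ c + 1 := by have := hcompl S; omega
      have := key Sᶜ hTc
      rw [compl_compl] at this
      simp only [hg]
      constructor <;> linarith [this.1, this.2]
    · have := key S h
      simp only [hg]
      exact this
  -- split the sum
  have hsplit := Finset.sum_filter_add_sum_filter_not Finset.univ
    (fun S : Finset (Fin n) => (∑ i ∈ S, k i) = c) g
  set Q : Finset (Finset (Fin n)) :=
    Finset.univ.filter (fun S : Finset (Fin n) => ¬ (∑ i ∈ S, k i) = c) with hQ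
  have hcard : P.card + Q.card = 2 ^ n := by
    rw [hP, hQ]
    rw [Finset.card_filter_add_card_filter_not]
    simp [Finset.card_univ]
  -- sum over P bounds
  have hPsum_lb : 0 ≤ ∑ S ∈ P, g S :=
    Finset.sum_nonneg (fun S hS => by
      rw [hP, Finset.mem_filter] at hS
      exact (hgP S hS.2).1)
  have hPsum_ub : ∑ S ∈ P, g S ≤ P.card * ε := by
    calc ∑ S ∈ P, g S ≤ ∑ _S ∈ P, ε := by
          apply Finset.sum_le_sum
          intro S hS
          rw [hP, Finset.mem_filter] at hS
          exact (hgP S hS.2).2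
      _ = P.card * ε := by rw [Finset.sum_const, nsmul_eq_mul]
  have hQsum_lb : (Q.card : ℝ) * (1 - ε) ≤ ∑ S ∈ Q, g S := by
    calc (Q.card : ℝ) * (1 - ε) = ∑ _S ∈ Q, (1 - ε) := by
          rw [Finset.sum_const, nsmul_eq_mul]
      _ ≤ ∑ S ∈ Q, g S := by
          apply Finset.sum_le_sum
          intro S hS
          rw [hQ, Finset.mem_filter] at hS
          exact (hgQ S hS.2).1
  have hQsum_ub : ∑ S ∈ Q, g S ≤ Q.card * (1 + ε) := by
    calc ∑ S ∈ Q, g S ≤ ∑ _S ∈ Q, (1 + ε) := by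
          apply Finset.sum_le_sum
          intro S hS
          rw [hQ, Finset.mem_filter] at hS
          exact (hgQ S hS.2).2
      _ = Q.card * (1 + ε) := by rw [Finset.sum_const, nsmul_eq_mul]
  have hsum_eq : ∑ S ∈ P, g S + ∑ S ∈ Q, g S = 2 * Z := by
    rw [← h2Z, ← hsplit, hP, hQ]
  have hcardR : (P.card : ℝ) + (Q.card : ℝ) = 2 ^ n := by
    have : ((P.card + Q.card : ℕ) : ℝ) = ((2 ^ n : ℕ) : ℝ) := by rw [hcard]
    push_cast at this
    linarith
  have h1ε : 0 < 1 - ε := by linarith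
  constructor
  · have hQle : (Q.card : ℝ) ≤ 2 * Z / (1 - ε) := by
      rw [le_div_iff₀ h1ε]
      nlinarith [hQsum_lb, hPsum_lb, hsum_eq]
    linarith
  · nlinarith [hQsum_ub, hPsum_ub, hsum_eq, hcardR]
end

section
/- Let N ≥ 1, let d_i > 0 and γ_i ∈ ℝ for i ∈ Fin N, and let b > 0. Define L(θ) := Σ_i ( d_i·log θ_i − b·θ_i·log θ_i + b·θ_i·γ_i ). Suppose θ* ∈ (Fin N → ℝ) with θ*_i > 0 for all i and Σ_i θ*_i = 1 is a local maximum of L restricted to the hyperplane { θ : Σ_i θ_i = 1 }. Then, setting φ_i := log θ*_i, there exists y ∈ ℝ such that for all i: d_i·exp(−φ_i) − b·φ_i + b·γ_i = y, and Σ_i exp(φ_i) = 1. -/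
lemma term_hasDerivAt (dk γk b x : ℝ) (hx : 0 < x) :
    HasDerivAt (fun u => dk * Real.log u - b * u * Real.log u + b * u * γk)
      (dk / x - b * (Real.log x + 1) + b * γk) x := by
  have h1 : HasDerivAt (fun u : ℝ => dk * Real.log u) (dk * x⁻¹) x :=
    (Real.hasDerivAt_log hx.ne').const_mul dk
  have h2 : HasDerivAt (fun u : ℝ => b * u) b x := by
    simpa using (hasDerivAt_id x).const_mul b
  have h3 : HasDerivAt (fun u : ℝ => b * u * Real.log u)
      (b * Real.log x + b * x * x⁻¹) x := h2.mul (Real.hasDerivAt_log hx.ne')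
  have h4 : HasDerivAt (fun u : ℝ => b * u * γk) (b * γk) x := by
    simpa using h2.mul_const γk
  have := (h1.sub h3).add h4
  refine this.congr_deriv ?_
  rw [mul_assoc b x x⁻¹, mul_inv_cancel₀ hx.ne', div_eq_mul_inv]
  ring

/-- A constrained local maximizer of the surrogate objective on the simplex satisfies,
    in log-parameters φ_i = log θ*_i, the stationarity system of Equation (9). -/
theorem stmt_13 {N : ℕ} (hN : 1 ≤ N) (d γ : Fin N → ℝ) (b : ℝ)
    (hd : ∀ i, 0 < d i) (hb : 0 < b)
    (L : (Fin N → ℝ) → ℝ)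
    (hL : ∀ θ, L θ =
      ∑ i, (d i * Real.log (θ i) - b * θ i * Real.log (θ i) + b * θ i * γ i))
    (θs : Fin N → ℝ) (hθ_pos : ∀ i, 0 < θs i) (hθ_sum : ∑ i, θs i = 1)
    (hmax : IsLocalMaxOn L {θ : Fin N → ℝ | ∑ i, θ i = 1} θs) :
    ∃ y : ℝ,
      (∀ i, d i * Real.exp (-(Real.log (θs i))) - b * Real.log (θs i) + b * γ i = y) ∧
      ∑ i, Real.exp (Real.log (θs i)) = 1 := by
  set g : Fin N → ℝ := fun k => d k / θs k - b * (Real.log (θs k) + 1) + b * γ k with hg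
  -- key: g is constant
  have key : ∀ i j : Fin N, g i = g j := by
    intro i j
    rcases eq_or_ne i j with rfl | hij
    · rfl
    -- perturbation direction
    set a : Fin N → ℝ := fun k => (if k = i then (1:ℝ) else 0) - (if k = j then 1 else 0)
      with ha
    set c : ℝ → (Fin N → ℝ) := fun t k => θs k + t * a k with hc
    have hc0 : c 0 = θs := by funext k; simp [hc]
    have hmem : ∀ t, c t ∈ {θ : Fin N → ℝ | ∑ i, θ i = 1} := by
      intro t
      simp only [Set.mem_setOf_eq, hc]
      rw [Finset.sum_add_distrib, hθ_sum, ← Finset.mul_sum]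
      simp [ha, Finset.sum_sub_distrib]
    have hcont : Continuous c := by
      apply continuous_pi
      intro k
      exact continuous_const.add (continuous_id.mul continuous_const)
    have htend : Filter.Tendsto c (nhds 0) (nhdsWithin θs {θ : Fin N → ℝ | ∑ i, θ i = 1}) := by
      rw [tendsto_nhdsWithin_iff]
      constructor
      · simpa [hc0] using hcont.tendsto 0
      · exact Filter.Eventually.of_forall hmem
    have hlocmax : IsLocalMax (L ∘ c) 0 := by
      have := htend.eventually hmax
      simpa [IsLocalMax, IsMaxFilter, hc0] using this
    -- derivative of L ∘ c at 0
    have hpos : ∀ k : Fin N, 0 < θs k + 0 * a k := by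
      intro k; simpa using hθ_pos k
    have hderiv : HasDerivAt (L ∘ c) (g i - g j) 0 := by
      have hsum : HasDerivAt
          (fun t => ∑ k : Fin N, (d k * Real.log (c t k) - b * (c t k) * Real.log (c t k)
            + b * (c t k) * γ k)) (∑ k : Fin N, g k * a k) 0 := by
        apply HasDerivAt.fun_sum
        intro k _
        have hinner : HasDerivAt (fun t : ℝ => θs k + t * a k) (a k) 0 := by
          simpa using (hasDerivAt_id (0:ℝ)).mul_const (a k) |>.const_add (θs k)
        have houter := term_hasDerivAt (d k) (γ k) b (θs k + 0 * a k) (hpos k)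
        have := houter.comp 0 hinner
        simpa [hc, hg, Function.comp_def] using this
      have heq : (L ∘ c) = fun t => ∑ k : Fin N, (d k * Real.log (c t k)
          - b * (c t k) * Real.log (c t k) + b * (c t k) * γ k) := by
        funext t; simp [hL]
      rw [heq]
      convert hsum using 1
      have h1 : ∑ k : Fin N, g k * a k
          = ∑ k : Fin N, (if k = i then g k else 0) - ∑ k : Fin N, (if k = j then g k else 0) := by
        rw [← Finset.sum_sub_distrib]
        apply Finset.sum_congr rfl
        intro k _
        simp only [ha]
        rcases eq_or_ne k i with rfl | hki <;> rcases eq_or_ne k j with rfl | hkj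
        · exact absurd rfl hij
        · simp [hij]
        · simp [hki]
        · simp [hki, hkj]
      rw [h1, Finset.sum_ite_eq' Finset.univ i g, Finset.sum_ite_eq' Finset.univ j g]
      simp
    have hd0 : deriv (L ∘ c) 0 = 0 := hlocmax.deriv_eq_zero
    have := hderiv.deriv
    rw [hd0] at this
    linarith
  refine ⟨g ⟨0, hN⟩ + b, ?_, ?_⟩
  · intro i
    have h0 : g ⟨0, hN⟩ = g i := (key i ⟨0, hN⟩).symm
    have hexp : Real.exp (-(Real.log (θs i))) = (θs i)⁻¹ := by
      rw [Real.exp_neg, Real.exp_log (hθ_pos i)]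
    rw [hexp, h0]
    simp only [hg, div_eq_mul_inv]
    ring
  · simp only [Real.exp_log (hθ_pos _)]
    exact hθ_sum
end
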